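/- Let Ã ∈ ℝ^{ñ×ñ}, B̃ ∈ ℝ^{ñ×m}, C̃ ∈ ℝ^{p×ñ}, F ∈ ℝ^{ñ×p}, and let U ∈ ℝ^{p×p} be invertible, with à + F·C̃ Hurwitz. Define M := U + U·C̃·(λI_ñ − (à + F·C̃))^{-1}·F ∈ 𝔽^{p×p} and N := U·C̃·(λI_ñ − (à + F·C̃))^{-1}·B̃ ∈ 𝔽^{p×m}, where 𝔽 = RatFunc ℝ. Then every entry of M and of N is stable, M is invertible over 𝔽, and M^{-1}·N = C̃·(λI_ñ − Ã)^{-1}·B̃; that is, the observer-based formula produces a stable left factorization of the strictly proper transfer function matrix C̃·(λI_ñ − Ã)^{-1}·B̃. -/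

import Mathlib

open Matrix Polynomial

set_option synthInstance.maxHeartbeats 1000000
set_option maxHeartbeats 1000000

noncomputable section

/-- The field of real rational functions. -/
abbrev FF : Type := RatFunc ℝ

/-- The rational function `λ` (the image of the polynomial indeterminate `X`). -/
noncomputable def lam : FF := RatFunc.X

/-- Entrywise embedding of a real matrix into matrices over `FF`. -/
noncomputable def mapF {k l : Type} (M : Matrix k l ℝ) : Matrix k l FF :=
  M.map (algebraMap ℝ FF)

/-- The pencil `λ I - M` over `FF`, for a real square matrix `M`. -/
noncomputable def lamI {k : Type} [Fintype k] [DecidableEq k] (M : Matrix k k ℝ) :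
    Matrix k k FF := lam • (1 : Matrix k k FF) - mapF M

/-- Entrywise complexification of a real matrix. -/
def mapC {k l : Type} (M : Matrix k l ℝ) : Matrix k l ℂ :=
  M.map (algebraMap ℝ ℂ)

/-- A real rational function is stable if every complex root of its reduced denominator
has real part `< 0`. -/
def StableF (f : RatFunc ℝ) : Prop :=
  ∀ z : ℂ, ((f.denom).map (algebraMap ℝ ℂ)).IsRoot z → z.re < 0

/-- A real square matrix is Hurwitz if all roots of its characteristic polynomial
have real part `< 0`. -/
def IsHurwitz {k : Type} [Fintype k] [DecidableEq k] (M : Matrix k k ℝ) : Prop :=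
  ∀ z : ℂ, ((M.charpoly).map (algebraMap ℝ ℂ)).IsRoot z → z.re < 0

/-- `A_K := K A11 - K A12 K + A21 - A22 K`. -/
noncomputable def AKmat {p r : ℕ} (A11 : Matrix (Fin p) (Fin p) ℝ)
    (A12 : Matrix (Fin p) (Fin r) ℝ) (A21 : Matrix (Fin r) (Fin p) ℝ)
    (A22 : Matrix (Fin r) (Fin r) ℝ) (K : Matrix (Fin r) (Fin p) ℝ) :
    Matrix (Fin r) (Fin p) ℝ :=
  K * A11 - K * A12 * K + A21 - A22 * K

/-- The `W` member of the SRTR pair obtained from `K`. -/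
noncomputable def srtrW {p r : ℕ} (A11 : Matrix (Fin p) (Fin p) ℝ)
    (A12 : Matrix (Fin p) (Fin r) ℝ) (A21 : Matrix (Fin r) (Fin p) ℝ)
    (A22 : Matrix (Fin r) (Fin r) ℝ) (K : Matrix (Fin r) (Fin p) ℝ) :
    Matrix (Fin p) (Fin p) FF :=
  mapF (A11 - A12 * K) +
    mapF A12 * (lamI (A22 + K * A12))⁻¹ * mapF (AKmat A11 A12 A21 A22 K)

/-- The `V` member of the SRTR pair obtained from `K`. -/
noncomputable def srtrV {p r m : ℕ} (A12 : Matrix (Fin p) (Fin r) ℝ)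
    (A22 : Matrix (Fin r) (Fin r) ℝ) (B1 : Matrix (Fin p) (Fin m) ℝ)
    (B2 : Matrix (Fin r) (Fin m) ℝ) (K : Matrix (Fin r) (Fin p) ℝ) :
    Matrix (Fin p) (Fin m) FF :=
  mapF B1 + mapF A12 * (lamI (A22 + K * A12))⁻¹ * mapF (K * B1 + B2)

/-- The plant transfer function `G = [I_p 0] (λ I_n - A)⁻¹ B`. -/
noncomputable def plantG {p r m : ℕ} (A11 : Matrix (Fin p) (Fin p) ℝ)
    (A12 : Matrix (Fin p) (Fin r) ℝ) (A21 : Matrix (Fin r) (Fin p) ℝ)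
    (A22 : Matrix (Fin r) (Fin r) ℝ) (B1 : Matrix (Fin p) (Fin m) ℝ)
    (B2 : Matrix (Fin r) (Fin m) ℝ) : Matrix (Fin p) (Fin m) FF :=
  fromCols (1 : Matrix (Fin p) (Fin p) FF) (0 : Matrix (Fin p) (Fin r) FF) *
    (lamI (fromBlocks A11 A12 A21 A22))⁻¹ * mapF (fromRows B1 B2)

/-- `(A12, A22)` is observable: `[A22 - μ I ; A12]` has full column rank for all `μ : ℂ`. -/
def ObsPair {p r : ℕ} (A12 : Matrix (Fin p) (Fin r) ℝ)
    (A22 : Matrix (Fin r) (Fin r) ℝ) : Prop :=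
  ∀ μ : ℂ, (fromRows (mapC A22 - μ • (1 : Matrix (Fin r) (Fin r) ℂ)) (mapC A12)).rank = r

/-- `(A, B)` is controllable: `[A - μ I, B]` has full row rank for all `μ : ℂ`. -/
def CtrbPair {p r m : ℕ} (A : Matrix (Fin p ⊕ Fin r) (Fin p ⊕ Fin r) ℝ)
    (B : Matrix (Fin p ⊕ Fin r) (Fin m) ℝ) : Prop :=
  ∀ μ : ℂ, (fromCols (mapC A - μ • (1 : Matrix (Fin p ⊕ Fin r) (Fin p ⊕ Fin r) ℂ))
    (mapC B)).rank = p + r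

/-! ### Auxiliary lemmas for `stmt_18` -/

/-- The algebra map `ℝ[X] → FF`. -/
noncomputable abbrev phiRF : ℝ[X] →+* FF := algebraMap ℝ[X] FF

lemma algebraMap_R_FF (a : ℝ) : algebraMap ℝ FF a = phiRF (C a) := by
  rw [RatFunc.algebraMap_apply, Polynomial.algebraMap_eq, _root_.map_one, div_one]

lemma mapF_eq {k l : Type} (M : Matrix k l ℝ) :
    mapF M = (M.map (C : ℝ →+* ℝ[X])).map phiRF := by
  ext i j; simp [mapF, Matrix.map_apply, algebraMap_R_FF]

lemma lamI_eq {k : Type} [Fintype k] [DecidableEq k] (M : Matrix k k ℝ) :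
    lamI M = (charmatrix M).map phiRF := by
  ext i j
  rcases eq_or_ne i j with rfl | h
  · simp [lamI, lam, mapF, charmatrix_apply_eq, algebraMap_R_FF, Matrix.one_apply,
      RatFunc.algebraMap_X]
  · simp [lamI, lam, mapF, charmatrix_apply_ne _ _ _ h, algebraMap_R_FF, Matrix.one_apply, h]

lemma det_lamI {k : Type} [Fintype k] [DecidableEq k] (M : Matrix k k ℝ) :
    (lamI M).det = phiRF M.charpoly := by
  rw [lamI_eq, charpoly, ← RingHom.mapMatrix_apply, ← RingHom.map_det]

lemma phi_charpoly_ne {k : Type} [Fintype k] [DecidableEq k] (M : Matrix k k ℝ) :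
    phiRF M.charpoly ≠ 0 := by
  simpa using (map_ne_zero_iff phiRF (RatFunc.algebraMap_injective ℝ)).mpr
    (M.charpoly_monic.ne_zero)

lemma isUnit_det_lamI {k : Type} [Fintype k] [DecidableEq k] (M : Matrix k k ℝ) :
    IsUnit (lamI M).det := by
  rw [det_lamI]; exact (phi_charpoly_ne M).isUnit

lemma lamI_inv_eq {k : Type} [Fintype k] [DecidableEq k] (M : Matrix k k ℝ) :
    (lamI M)⁻¹ = (phiRF M.charpoly)⁻¹ • (adjugate (charmatrix M)).map phiRF := by
  rw [Matrix.inv_def, det_lamI, Ring.inverse_eq_inv', lamI_eq,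
    ← RingHom.mapMatrix_apply, ← RingHom.map_adjugate, RingHom.mapMatrix_apply]

lemma stable_div (p c : ℝ[X])
    (hc : ∀ z : ℂ, ((c.map (algebraMap ℝ ℂ))).IsRoot z → z.re < 0) :
    StableF (phiRF p / phiRF c) := by
  intro z hz
  apply hc
  obtain ⟨e, he⟩ := RatFunc.denom_div_dvd p c
  have h2 : c.map (algebraMap ℝ ℂ) = ((phiRF p / phiRF c).denom.map (algebraMap ℝ ℂ)) *
      (e.map (algebraMap ℝ ℂ)) := by rw [← Polynomial.map_mul, ← he]
  simp only [IsRoot, h2, eval_mul, hz.eq_zero, zero_mul]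

lemma smul_entry_stable {k l : Type} (c : ℝ[X])
    (hc : ∀ z : ℂ, ((c.map (algebraMap ℝ ℂ))).IsRoot z → z.re < 0)
    (P : Matrix k l ℝ[X]) (i : k) (j : l) :
    StableF ((((phiRF c)⁻¹ : FF) • P.map (phiRF : ℝ[X] → FF)) i j) := by
  have h : (((phiRF c)⁻¹ : FF) • P.map (phiRF : ℝ[X] → FF)) i j
      = phiRF (P i j) / phiRF c := by
    simp [Matrix.smul_apply, Matrix.map_apply, div_eq_inv_mul]
  rw [h]; exact stable_div _ _ hc

lemma smul_map_phiRF {k l : Type} (c : ℝ[X]) (Z : Matrix k l ℝ[X]) :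
    (c • Z).map (phiRF : ℝ[X] → FF) = phiRF c • Z.map (phiRF : ℝ[X] → FF) := by
  ext i j; simp [Matrix.map_apply, Matrix.smul_apply, smul_eq_mul]

lemma mapF_mul {k l n' : Type} [Fintype l] (G : Matrix k l ℝ) (H : Matrix l n' ℝ) :
    mapF (G * H) = mapF G * mapF H := by
  simp [mapF, Matrix.map_mul]

lemma sandwich_rep {k l n' : Type} [Fintype n'] [DecidableEq n'] [Fintype k]
    (G : Matrix k n' ℝ) (A : Matrix n' n' ℝ) (H : Matrix n' l ℝ) :
    mapF G * (lamI A)⁻¹ * mapF H =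
      (phiRF A.charpoly)⁻¹ •
        ((G.map (C : ℝ →+* ℝ[X]) * adjugate (charmatrix A) * H.map (C : ℝ →+* ℝ[X])).map
          (phiRF : ℝ[X] → FF)) := by
  rw [lamI_inv_eq, Matrix.mul_smul, Matrix.smul_mul, Matrix.map_mul, Matrix.map_mul,
    ← mapF_eq, ← mapF_eq]

lemma mapF_smul_rep {k l : Type} (cp : ℝ[X]) (hcp : phiRF cp ≠ 0) (G : Matrix k l ℝ) :
    mapF G = (phiRF cp)⁻¹ • ((cp • G.map (C : ℝ →+* ℝ[X])).map (phiRF : ℝ[X] → FF)) := by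
  rw [smul_map_phiRF, ← mapF_eq, smul_smul, inv_mul_cancel₀ hcp, one_smul]

/-- the observer-based formula produces a stable left factorization of the
strictly proper transfer function matrix `C̃ (λ I - Ã)⁻¹ B̃`. -/
theorem stmt_18 (q p m : ℕ) (hq : 0 < q) (hp : 0 < p) (hm : 0 < m)
    (At : Matrix (Fin q) (Fin q) ℝ) (Bt : Matrix (Fin q) (Fin m) ℝ)
    (Ct : Matrix (Fin p) (Fin q) ℝ) (Fo : Matrix (Fin q) (Fin p) ℝ)
    (U : Matrix (Fin p) (Fin p) ℝ) (hU : IsUnit U)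
    (hHur : IsHurwitz (At + Fo * Ct)) :
    let M : Matrix (Fin p) (Fin p) FF :=
      mapF U + mapF U * mapF Ct * (lamI (At + Fo * Ct))⁻¹ * mapF Fo
    let N : Matrix (Fin p) (Fin m) FF :=
      mapF U * mapF Ct * (lamI (At + Fo * Ct))⁻¹ * mapF Bt
    (∀ i j, StableF (M i j)) ∧ (∀ i j, StableF (N i j)) ∧
    IsUnit M ∧
    M⁻¹ * N = mapF Ct * (lamI At)⁻¹ * mapF Bt := by
  intro M N
  have hMdef : M = mapF U + mapF U * mapF Ct * (lamI (At + Fo * Ct))⁻¹ * mapF Fo := rfl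
  have hNdef : N = mapF U * mapF Ct * (lamI (At + Fo * Ct))⁻¹ * mapF Bt := rfl
  clear_value M N
  have hdetF : IsUnit (lamI (At + Fo * Ct)).det := isUnit_det_lamI _
  have hdetA : IsUnit (lamI At).det := isUnit_det_lamI At
  have hu : IsUnit (mapF U) := hU.map ((algebraMap ℝ FF).mapMatrix)
  have hudet : IsUnit (mapF U).det := (Matrix.isUnit_iff_isUnit_det _).mp hu
  set SF := lamI (At + Fo * Ct) with hSFdef
  set SA := lamI At with hSAdef
  -- key pencil identity
  have key : mapF Fo * mapF Ct = SA - SF := by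
    rw [← mapF_mul, hSAdef, hSFdef]
    ext i j
    simp [lamI, mapF, Matrix.map_apply, Matrix.sub_apply, Matrix.add_apply, map_add]
  have key2 : SF⁻¹ * (mapF Fo * mapF Ct) * SA⁻¹ = SF⁻¹ - SA⁻¹ := by
    rw [key, Matrix.mul_sub, Matrix.sub_mul, mul_assoc, Matrix.mul_nonsing_inv _ hdetA,
      mul_one, Matrix.nonsing_inv_mul _ hdetF, one_mul]
  have key2' : SA⁻¹ * (mapF Fo * mapF Ct) * SF⁻¹ = SF⁻¹ - SA⁻¹ := by
    rw [key, Matrix.mul_sub, Matrix.sub_mul, Matrix.nonsing_inv_mul _ hdetA, one_mul,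
      mul_assoc, Matrix.mul_nonsing_inv _ hdetF, mul_one]
  -- right inverse of M
  have hmid : mapF Ct * SF⁻¹ * mapF Fo * (mapF Ct * SA⁻¹ * mapF Fo)
      = mapF Ct * (SF⁻¹ * (mapF Fo * mapF Ct) * SA⁻¹) * mapF Fo := by
    simp only [Matrix.mul_assoc]
  have hinner : (1 + mapF Ct * SF⁻¹ * mapF Fo) * (1 - mapF Ct * SA⁻¹ * mapF Fo) = 1 := by
    have expand : (1 + mapF Ct * SF⁻¹ * mapF Fo) * (1 - mapF Ct * SA⁻¹ * mapF Fo)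
        = 1 + mapF Ct * SF⁻¹ * mapF Fo - mapF Ct * SA⁻¹ * mapF Fo
          - mapF Ct * SF⁻¹ * mapF Fo * (mapF Ct * SA⁻¹ * mapF Fo) := by
      noncomm_ring
    rw [expand, hmid, key2, Matrix.mul_sub, Matrix.sub_mul]
    abel
  have hMfac : M = mapF U * (1 + mapF Ct * SF⁻¹ * mapF Fo) := by
    rw [hMdef, mul_add, mul_one, ← Matrix.mul_assoc, ← Matrix.mul_assoc]
  have hMM' : M * ((1 - mapF Ct * SA⁻¹ * mapF Fo) * (mapF U)⁻¹) = 1 := by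
    rw [hMfac, Matrix.mul_assoc, ← Matrix.mul_assoc (1 + mapF Ct * SF⁻¹ * mapF Fo),
      hinner, Matrix.one_mul, Matrix.mul_nonsing_inv _ hudet]
  have hMunit : IsUnit M := by
    rw [Matrix.isUnit_iff_isUnit_det]
    apply IsUnit.of_mul_eq_one (((1 - mapF Ct * SA⁻¹ * mapF Fo) * (mapF U)⁻¹).det)
    rw [← Matrix.det_mul, hMM', Matrix.det_one]
  have hMinv : M⁻¹ = (1 - mapF Ct * SA⁻¹ * mapF Fo) * (mapF U)⁻¹ :=
    Matrix.inv_eq_right_inv hMM'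
  -- the factorization identity
  have hfact : M⁻¹ * N = mapF Ct * SA⁻¹ * mapF Bt := by
    have cancel : (mapF U)⁻¹ * (mapF U * (mapF Ct * (SF⁻¹ * mapF Bt)))
        = mapF Ct * (SF⁻¹ * mapF Bt) := by
      rw [← Matrix.mul_assoc, Matrix.nonsing_inv_mul _ hudet, Matrix.one_mul]
    have hmid2 : SA⁻¹ * (mapF Fo * (mapF Ct * (SF⁻¹ * mapF Bt)))
        = (SA⁻¹ * (mapF Fo * mapF Ct) * SF⁻¹) * mapF Bt := by
      simp only [Matrix.mul_assoc]
    rw [hMinv, hNdef]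
    simp only [Matrix.mul_assoc]
    rw [cancel, Matrix.sub_mul, Matrix.one_mul]
    simp only [Matrix.mul_assoc]
    rw [hmid2, key2', Matrix.sub_mul, Matrix.mul_sub]
    abel
  refine ⟨?_, ?_, hMunit, hfact⟩
  -- stability of M entries
  · intro i j
    have h2 : M = (phiRF (At + Fo * Ct).charpoly)⁻¹ •
        ((((At + Fo * Ct).charpoly • U.map (C : ℝ →+* ℝ[X]) +
          (U * Ct).map (C : ℝ →+* ℝ[X]) * adjugate (charmatrix (At + Fo * Ct)) *
            Fo.map (C : ℝ →+* ℝ[X]))).map (phiRF : ℝ[X] → FF)) := by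
      rw [Matrix.map_add _ (map_add phiRF), smul_add, hMdef, hSFdef, ← mapF_mul,
        sandwich_rep, ← mapF_smul_rep _ (phi_charpoly_ne (At + Fo * Ct))]
    rw [h2]
    exact smul_entry_stable _ hHur _ i j
  -- stability of N entries
  · intro i j
    have h2 : N = (phiRF (At + Fo * Ct).charpoly)⁻¹ •
        (((U * Ct).map (C : ℝ →+* ℝ[X]) * adjugate (charmatrix (At + Fo * Ct)) *
            Bt.map (C : ℝ →+* ℝ[X])).map (phiRF : ℝ[X] → FF)) := by
      rw [hNdef, hSFdef, ← mapF_mul, sandwich_rep]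
    rw [h2]
    exact smul_entry_stable _ hHur _ i j
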